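/- Let A ∈ (0,1) be irrational. Then there exists a sequence {p_k/q_k} of fractions with p_0/q_0 = 0/1, with p_k/q_k ≺ p_{k+1}/q_{k+1} for all k, and with lim_{k→∞} p_k/q_k = A. -/

import Mathlib

/-- An *even rational parameter* is a fraction `p/q` with `p, q` coprime positive
integers, `p < q`, and `p*q` even. -/
def EvenParam (p q : ℕ) : Prop :=
  Nat.Coprime p q ∧ 0 < p ∧ p < q ∧ Even (p * q)

/-- `τ` is the *tune* of `p/q`: `0 < 2τ < p+q` and `2pτ ≡ ±1 (mod p+q)`. -/
def IsTune (p q τ : ℕ) : Prop :=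
  0 < 2 * τ ∧ 2 * τ < p + q ∧
    (((p : ℤ) + q) ∣ 2 * p * τ - 1 ∨ ((p : ℤ) + q) ∣ 2 * p * τ + 1)

/-- `p'/q'` is the *even predecessor* of `p/q`. -/
def IsEvenPred (p q p' q' : ℕ) : Prop :=
  Nat.Coprime p' q' ∧ p' < q' ∧ Even (p' * q') ∧
    ((p : ℤ) * q' - (q : ℤ) * p').natAbs = 1 ∧ p' + q' < p + q

/-- `κ` is the unique nonnegative integer with `κ/(2κ+1) ≤ τ/(p+q) < (κ+1)/(2κ+3)`. -/
def IsKappa (p q τ κ : ℕ) : Prop :=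
  κ * (p + q) ≤ (2 * κ + 1) * τ ∧ (2 * κ + 3) * τ < (κ + 1) * (p + q)

/-- The predecessor relation: `pstar/qstar ≺ p/q`. -/
def PredRel (pstar qstar p q : ℕ) : Prop :=
  EvenParam p q ∧
    ((p = 1 ∧ pstar = 0 ∧ qstar = 1) ∨
      (2 ≤ p ∧ ∃ τ κ p' q', IsTune p q τ ∧ IsKappa p q τ κ ∧
        IsEvenPred p q p' q' ∧
        ((κ = 0 ∧ pstar = p' ∧ qstar = q') ∨
          (1 ≤ κ ∧ pstar + 2 * κ * p' = p ∧ qstar + 2 * κ * q' = q))))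

/-! ### auxiliary real lemmas -/

/-- `y` lies strictly between `x` and `z` (in either order). -/
def BtwR (x y z : ℝ) : Prop := (x < y ∧ y < z) ∨ (z < y ∧ y < x)

lemma btw_comm {x y z : ℝ} (h : BtwR x y z) : BtwR z y x := by
  rcases h with ⟨h1, h2⟩ | ⟨h1, h2⟩
  · exact Or.inr ⟨h1, h2⟩
  · exact Or.inl ⟨h1, h2⟩

lemma btw_split {x z A m : ℝ} (h : BtwR x A z) (hm : BtwR x m z) (hne : A ≠ m) :
    BtwR x A m ∨ BtwR m A z := by
  rcases lt_or_gt_of_ne hne with hlt | hlt <;>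
    rcases h with ⟨h1, h2⟩ | ⟨h1, h2⟩ <;> rcases hm with ⟨m1, m2⟩ | ⟨m1, m2⟩ <;>
      first
        | (left; left; constructor <;> linarith)
        | (left; right; constructor <;> linarith)
        | (right; left; constructor <;> linarith)
        | (right; right; constructor <;> linarith)
        | (exfalso; linarith)

lemma btw_abs {x z y w : ℝ} (h1 : BtwR x y z) (h2 : BtwR x w z) : |y - w| < |z - x| := by
  rcases h1 with ⟨a1, a2⟩ | ⟨a1, a2⟩ <;> rcases h2 with ⟨b1, b2⟩ | ⟨b1, b2⟩ <;>
    rw [abs_lt] <;> constructor <;>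
    · rcases abs_cases (z - x) with ⟨he, _⟩ | ⟨he, _⟩ <;> linarith

lemma coprime_of_det (m n u v : ℕ)
    (h : (m * v : ℤ) - n * u = 1 ∨ (m * v : ℤ) - n * u = -1) :
    Nat.Coprime m n := by
  rw [← Nat.isCoprime_iff_coprime]
  rcases h with h | h
  · exact ⟨v, -u, by linarith⟩
  · exact ⟨-v, u, by linarith⟩

lemma coprime_of_det' (m n u v : ℕ)
    (h : (m * v : ℤ) - n * u = 1 ∨ (m * v : ℤ) - n * u = -1) :
    Nat.Coprime u v := by
  rw [← Nat.isCoprime_iff_coprime]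
  rcases h with h | h
  · exact ⟨-n, m, by linarith⟩
  · exact ⟨n, -m, by linarith⟩

lemma even_mul_of_odd_add {m n : ℕ} (h : Odd (m + n)) : Even (m * n) := by
  rcases Nat.even_or_odd m with hm | hm
  · exact hm.mul_right n
  · rw [Nat.odd_add] at h
    exact (h.mp hm).mul_left m

/-- Main builder: verify `PredRel` from elementary arithmetic facts. -/
theorem predRel_build (p q x y κ pstar qstar : ℕ)
    (hdet : (p * y : ℤ) - q * x = 1 ∨ (p * y : ℤ) - q * x = -1)
    (hp2 : 2 ≤ p) (hpq : p < q) (hxy : x < y)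
    (hsum : x + y < p + q)
    (hox : Odd (x + y)) (hop : Odd (p + q))
    (hk1 : (2 * κ + 1) * (x + y) ≤ p + q) (hk2 : p + q < (2 * κ + 3) * (x + y))
    (hcase : (κ = 0 ∧ pstar = x ∧ qstar = y) ∨
      (1 ≤ κ ∧ pstar + 2 * κ * x = p ∧ qstar + 2 * κ * y = q)) :
    PredRel pstar qstar p q := by
  have hox' := Nat.odd_iff.mp hox
  have hop' := Nat.odd_iff.mp hop
  set τ := (p + q - (x + y)) / 2 with hτ
  have h2τ : 2 * τ = p + q - (x + y) := by omega
  have h2τ' : 2 * τ + (x + y) = p + q := by omega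
  have h2τZ : (2 * τ : ℤ) = (p : ℤ) + q - x - y := by
    have := congrArg (Nat.cast : ℕ → ℤ) h2τ'
    push_cast at this; linarith
  refine ⟨⟨coprime_of_det p q x y hdet, by omega, hpq, even_mul_of_odd_add hop⟩,
    Or.inr ⟨hp2, τ, κ, x, y, ?_, ?_, ?_, ?_⟩⟩
  · refine ⟨by omega, by omega, ?_⟩
    rcases hdet with h | h
    · exact Or.inr ⟨(p : ℤ) - x, by push_cast; linear_combination (p : ℤ) * h2τZ - h⟩
    · exact Or.inl ⟨(p : ℤ) - x, by push_cast; linear_combination (p : ℤ) * h2τZ - h⟩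
  · constructor
    · nlinarith [h2τ']
    · nlinarith [h2τ']
  · exact ⟨coprime_of_det' p q x y hdet, hxy, even_mul_of_odd_add hox,
      by rcases hdet with h | h <;> rw [h] <;> rfl, hsum⟩
  · exact hcase

lemma mediant_btw (e f g h : ℕ) (hf : 0 < f) (hh : 0 < h)
    (hdet : (e * h : ℤ) - f * g = 1 ∨ (e * h : ℤ) - f * g = -1) :
    BtwR ((e : ℝ) / f) (((e : ℝ) + g) / ((f : ℝ) + h)) ((g : ℝ) / h) := by
  have hf' : (0 : ℝ) < f := by exact_mod_cast hf
  have hh' : (0 : ℝ) < h := by exact_mod_cast hh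
  have hfh : (0 : ℝ) < (f : ℝ) + h := by linarith
  rcases hdet with hd | hd
  · have hd' : (e : ℝ) * h - f * g = 1 := by exact_mod_cast hd
    right
    constructor
    · rw [div_lt_div_iff₀ hh' hfh]; nlinarith
    · rw [div_lt_div_iff₀ hfh hf']; nlinarith
  · have hd' : (e : ℝ) * h - f * g = -1 := by exact_mod_cast hd
    left
    constructor
    · rw [div_lt_div_iff₀ hf' hfh]; nlinarith
    · rw [div_lt_div_iff₀ hfh hh']; nlinarith

structure St where
  a : ℕ
  b : ℕ
  e : ℕ
  f : ℕ
  g : ℕ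
  h : ℕ

structure InvSt (A : ℝ) (s : St) : Prop where
  hae : s.a = s.e + s.g
  hbf : s.b = s.f + s.h
  hdet : (s.e * s.h : ℤ) - s.f * s.g = 1 ∨ (s.e * s.h : ℤ) - s.f * s.g = -1
  ha1 : 1 ≤ s.a
  hab : s.a < s.b
  hef : s.e < s.f
  hgh : s.g ≤ s.h
  hg1 : 1 ≤ s.g
  hoef : Odd (s.e + s.f)
  hog : Odd s.g
  hoh : Odd s.h
  hbtw : BtwR ((s.e : ℝ) / s.f) A ((s.g : ℝ) / s.h)
  hguard : BtwR ((s.e : ℝ) / s.f) A (((s.a : ℝ) + s.e) / ((s.b : ℝ) + s.f)) →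
    s.a + s.b < 3 * (s.e + s.f) ∧ 1 ≤ s.e

lemma find_kappa (c : ℕ → ℝ) (hmono : ∀ m n : ℕ, m ≤ n → c n ≤ c m)
    (δ : ℝ) (hδ1 : 0 < δ) (hδ2 : δ < c 1) (hne : ∀ t, δ ≠ c t)
    (hlim : ∀ ε > 0, ∃ t, c t < ε) :
    ∃ κ : ℕ, 1 ≤ κ ∧ c (2 * κ + 1) < δ ∧ δ < c (2 * κ - 1) := by
  classical
  have hex : ∃ κ : ℕ, 1 ≤ κ ∧ c (2 * κ + 1) < δ := by
    obtain ⟨t, ht⟩ := hlim δ hδ1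
    exact ⟨t + 1, by omega, lt_of_le_of_lt (hmono t (2 * (t + 1) + 1) (by omega)) ht⟩
  refine ⟨Nat.find hex, (Nat.find_spec hex).1, (Nat.find_spec hex).2, ?_⟩
  rcases Nat.lt_or_ge (Nat.find hex) 2 with hκ | hκ
  · have h1 : Nat.find hex = 1 := by have := (Nat.find_spec hex).1; omega
    rw [h1]; simpa using hδ2
  · have hmin := Nat.find_min hex (m := Nat.find hex - 1) (by omega)
    push_neg at hmin
    have h1 : 2 * (Nat.find hex - 1) + 1 = 2 * Nat.find hex - 1 := by omega
    have := hmin (by omega)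
    rw [h1] at this
    rcases lt_or_eq_of_le this with h | h
    · exact h
    · exact absurd h (hne _)

lemma irr_ne_div (A : ℝ) (hirr : Irrational A) (m n : ℕ) (hn : 0 < n) :
    A ≠ (m : ℝ) / n := by
  intro h
  exact hirr ⟨(m : ℚ) / n, by rw [h]; push_cast; ring⟩

lemma odd_add_two_mul (x k : ℕ) : Odd (x + 2 * k) ↔ Odd x := by
  rw [Nat.odd_iff, Nat.odd_iff]; omega

lemma InvSt.mk' (A : ℝ) (a b e f g h : ℕ)
    (hae : a = e + g) (hbf : b = f + h)
    (hdet : (e * h : ℤ) - f * g = 1 ∨ (e * h : ℤ) - f * g = -1)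
    (ha1 : 1 ≤ a) (hab : a < b) (hef : e < f) (hgh : g ≤ h) (hg1 : 1 ≤ g)
    (hoef : Odd (e + f)) (hog : Odd g) (hoh : Odd h)
    (hbtw : BtwR ((e : ℝ) / f) A ((g : ℝ) / h))
    (hguard : BtwR ((e : ℝ) / f) A (((a : ℝ) + e) / ((b : ℝ) + f)) →
      a + b < 3 * (e + f) ∧ 1 ≤ e) :
    InvSt A ⟨a, b, e, f, g, h⟩ :=
  ⟨hae, hbf, hdet, ha1, hab, hef, hgh, hg1, hoef, hog, hoh, hbtw, hguard⟩


lemma move1 (A : ℝ) (a b e f g hh : ℕ) (hs : InvSt A ⟨a, b, e, f, g, hh⟩)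
    (hside : BtwR ((a : ℝ) / b) A ((g : ℝ) / hh)) :
    ∃ s' : St, InvSt A s' ∧ PredRel a b s'.a s'.b ∧ b < s'.b := by
  obtain ⟨hae, hbf, hdet, ha1, hab, hef, hgh, hg1, hoef, hog, hoh, hbtw, hguard⟩ := hs
  simp only at hae hbf hdet ha1 hab hef hgh hg1 hoef hog hoh hbtw hguard
  have hoef' := Nat.odd_iff.mp hoef
  have hog' := Nat.odd_iff.mp hog
  have hoh' := Nat.odd_iff.mp hoh
  subst hae hbf
  refine ⟨⟨(e + g) + g, (f + hh) + hh, e + g, f + hh, g, hh⟩, ?_, ?_, ?_⟩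
  · refine InvSt.mk' A _ _ _ _ _ _ (by omega) (by omega) ?_ (by omega) (by omega)
      (by omega) (by omega) (by omega) (Nat.odd_iff.mpr (by omega)) hog hoh ?_
      (fun _ => ⟨by omega, by omega⟩)
    · rcases hdet with h | h
      · exact Or.inl (by push_cast; push_cast at h; linear_combination h)
      · exact Or.inr (by push_cast; push_cast at h; linear_combination h)
    · push_cast
      push_cast at hside
      exact hside
  · show PredRel (e + g) (f + hh) ((e + g) + g) ((f + hh) + hh)
    refine predRel_build _ _ (e + g) (f + hh) 0 _ _ ?_ (by omega) (by omega) (by omega)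
      (by omega) (Nat.odd_iff.mpr (by omega)) (Nat.odd_iff.mpr (by omega))
      (by omega) (by omega) (Or.inl ⟨rfl, rfl, rfl⟩)
    rcases hdet with h | h
    · exact Or.inr (by push_cast; push_cast at h; linear_combination -h)
    · exact Or.inl (by push_cast; push_cast at h; linear_combination -h)
  · show f + hh < (f + hh) + hh
    omega

lemma move2 (A : ℝ) (a b e f g hh : ℕ) (hs : InvSt A ⟨a, b, e, f, g, hh⟩)
    (hside : BtwR (((a + e : ℕ) : ℝ) / ((b + f : ℕ) : ℝ)) A ((a : ℝ) / b)) :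
    ∃ s' : St, InvSt A s' ∧ PredRel a b s'.a s'.b ∧ b < s'.b := by
  obtain ⟨hae, hbf, hdet, ha1, hab, hef, hgh, hg1, hoef, hog, hoh, hbtw, hguard⟩ := hs
  simp only at hae hbf hdet ha1 hab hef hgh hg1 hoef hog hoh hbtw hguard
  have hoef' := Nat.odd_iff.mp hoef
  have hog' := Nat.odd_iff.mp hog
  have hoh' := Nat.odd_iff.mp hoh
  subst hae hbf
  refine ⟨⟨2 * (e + g) + e, 2 * (f + hh) + f, e + g, f + hh, (e + g) + e, (f + hh) + f⟩,
    ?_, ?_, ?_⟩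
  · refine InvSt.mk' A _ _ _ _ _ _ (by omega) (by omega) ?_ (by omega) (by omega)
      (by omega) (by omega) (by omega) (Nat.odd_iff.mpr (by omega))
      (Nat.odd_iff.mpr (by omega)) (Nat.odd_iff.mpr (by omega)) ?_
      (fun _ => ⟨by omega, by omega⟩)
    · rcases hdet with h | h
      · exact Or.inr (by push_cast; push_cast at h; linear_combination -h)
      · exact Or.inl (by push_cast; push_cast at h; linear_combination -h)
    · have := btw_comm hside
      push_cast at this ⊢
      exact this
  · show PredRel (e + g) (f + hh) (2 * (e + g) + e) (2 * (f + hh) + f)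
    refine predRel_build _ _ (e + g) (f + hh) 0 _ _ ?_ (by omega) (by omega) (by omega)
      (by omega) (Nat.odd_iff.mpr (by omega)) (Nat.odd_iff.mpr (by omega))
      (by omega) (by omega) (Or.inl ⟨rfl, rfl, rfl⟩)
    rcases hdet with h | h
    · exact Or.inl (by push_cast; push_cast at h; linear_combination h)
    · exact Or.inr (by push_cast; push_cast at h; linear_combination h)
  · show f + hh < 2 * (f + hh) + f
    omega

set_option maxHeartbeats 1000000 in
lemma move3 (A : ℝ) (hirr : Irrational A) (a b e f g hh : ℕ)
    (hs : InvSt A ⟨a, b, e, f, g, hh⟩)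
    (hside : BtwR ((e : ℝ) / f) A (((a + e : ℕ) : ℝ) / ((b + f : ℕ) : ℝ))) :
    ∃ s' : St, InvSt A s' ∧ PredRel a b s'.a s'.b ∧ b < s'.b := by
  obtain ⟨hae, hbf, hdet, ha1, hab, hef, hgh, hg1, hoef, hog, hoh, hbtw, hguard⟩ := hs
  simp only at hae hbf hdet ha1 hab hef hgh hg1 hoef hog hoh hbtw hguard
  have hoef' := Nat.odd_iff.mp hoef
  have hog' := Nat.odd_iff.mp hog
  have hoh' := Nat.odd_iff.mp hoh
  obtain ⟨hk3, he1⟩ := hguard (by push_cast at hside ⊢; exact hside)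
  have hf1 : 1 ≤ f := by omega
  have hb1 : 1 ≤ b := by omega
  have hfR : (0 : ℝ) < f := by exact_mod_cast hf1
  have hbR : (0 : ℝ) < b := by exact_mod_cast hb1
  have haeZ : (a : ℤ) = (e : ℤ) + g := by exact_mod_cast hae
  have hbfZ : (b : ℤ) = (f : ℤ) + hh := by exact_mod_cast hbf
  -- the sign
  obtain ⟨ε, hε1, hafR⟩ : ∃ ε : ℝ, (ε = 1 ∨ ε = -1) ∧ (a : ℝ) * f - (b : ℝ) * e = ε := by
    rcases hdet with h | h
    · refine ⟨-1, Or.inr rfl, ?_⟩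
      have : (a * f : ℤ) - b * e = -1 := by linear_combination -h + (f : ℤ) * haeZ - (e : ℤ) * hbfZ
      exact_mod_cast this
    · refine ⟨1, Or.inl rfl, ?_⟩
      have : (a * f : ℤ) - b * e = 1 := by linear_combination -h + (f : ℤ) * haeZ - (e : ℤ) * hbfZ
      exact_mod_cast this
  set c : ℕ → ℝ := fun t => 1 / ((f : ℝ) * ((b : ℝ) + t * f)) with hc
  have hden : ∀ t : ℕ, (0 : ℝ) < (b : ℝ) + t * f := by
    intro t
    have : (0 : ℝ) ≤ (t : ℝ) * f := by positivity
    linarith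
  have hcpos : ∀ t : ℕ, 0 < c t := by
    intro t; simp only [hc]
    exact div_pos one_pos (mul_pos hfR (hden t))
  have hmono : ∀ m n : ℕ, m ≤ n → c n ≤ c m := by
    intro m n hmn
    simp only [hc]
    apply one_div_le_one_div_of_le (mul_pos hfR (hden m))
    have hmn' : (m : ℝ) ≤ n := by exact_mod_cast hmn
    gcongr
  have hlim : ∀ ε' > (0 : ℝ), ∃ t, c t < ε' := by
    intro ε' hε'
    obtain ⟨n, hn⟩ := exists_nat_gt (1 / ε')
    refine ⟨n, ?_⟩
    have hn0 : (0 : ℝ) < n := lt_of_le_of_lt (by positivity) hn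
    have hkey : (n : ℝ) ≤ f * ((b : ℝ) + n * f) := by
      have h1 : (1 : ℝ) ≤ f := by exact_mod_cast hf1
      have h2 : (1 : ℝ) ≤ b := by exact_mod_cast hb1
      have t1 : (n : ℝ) ≤ (n : ℝ) * f := le_mul_of_one_le_right (Nat.cast_nonneg n) h1
      have t3 : (b : ℝ) + n * f ≤ f * ((b : ℝ) + n * f) :=
        le_mul_of_one_le_left (hden n).le h1
      linarith
    have := lt_of_lt_of_le hn hkey
    simp only [hc]
    rw [← one_div_one_div ε']
    exact one_div_lt_one_div_of_lt (by positivity) this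
  have hNform : ∀ t : ℕ, ((a + t * e : ℕ) : ℝ) / ((b + t * f : ℕ) : ℝ) =
      (e : ℝ) / f + ε * c t := by
    intro t
    simp only [hc]
    push_cast
    have h1 : ((b : ℝ) + t * f) ≠ 0 := ne_of_gt (hden t)
    have h2 : (f : ℝ) ≠ 0 := ne_of_gt hfR
    field_simp
    ring_nf
    linear_combination hafR
  have hside1 : BtwR ((e : ℝ) / f) A ((e : ℝ) / f + ε * c 1) := by
    have h1 := hNform 1
    simp only [one_mul] at h1
    rwa [h1] at hside
  have hkey : 0 < ε * (A - (e : ℝ) / f) ∧ ε * (A - (e : ℝ) / f) < c 1 := by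
    rcases hε1 with rfl | rfl <;> rcases hside1 with ⟨h1, h2⟩ | ⟨h1, h2⟩ <;>
      constructor <;> linarith [hcpos 1]
  obtain ⟨hδ1, hδ2⟩ := hkey
  have hne : ∀ t, ε * (A - (e : ℝ) / f) ≠ c t := by
    intro t ht
    refine irr_ne_div A hirr (a + t * e) (b + t * f) (by omega) ?_
    rw [hNform t]
    rcases hε1 with rfl | rfl <;> linarith
  obtain ⟨κ, hκ1, hκ2, hκ3⟩ := find_kappa c hmono _ hδ1 hδ2 hne hlim
  obtain ⟨m, rfl⟩ : ∃ m, κ = m + 1 := ⟨κ - 1, by omega⟩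
  rw [show 2 * (m + 1) - 1 = 2 * m + 1 from by omega] at hκ3
  rw [show 2 * (m + 1) + 1 = 2 * m + 3 from by omega] at hκ2
  refine ⟨⟨a + (2 * m + 2) * e, b + (2 * m + 2) * f, e, f,
    a + (2 * m + 1) * e, b + (2 * m + 1) * f⟩, ?_, ?_, ?_⟩
  · refine InvSt.mk' A _ _ _ _ _ _ (by ring) (by ring) ?_
      (by linarith [Nat.zero_le ((2 * m + 2) * e)])
      (by have := Nat.mul_le_mul_left (2 * m + 2) hef.le; linarith)
      hef
      (by have := Nat.mul_le_mul_left (2 * m + 1) hef.le; linarith)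
      (by linarith [Nat.zero_le ((2 * m + 1) * e)])
      hoef ?_ ?_ ?_ ?_
    · rcases hdet with h | h
      · exact Or.inl (by push_cast; linear_combination h + (e : ℤ) * hbfZ - (f : ℤ) * haeZ)
      · exact Or.inr (by push_cast; linear_combination h + (e : ℤ) * hbfZ - (f : ℤ) * haeZ)
    · rw [show a + (2 * m + 1) * e = (a + e) + 2 * (m * e) from by ring, odd_add_two_mul]
      exact Nat.odd_iff.mpr (by omega)
    · rw [show b + (2 * m + 1) * f = (b + f) + 2 * (m * f) from by ring, odd_add_two_mul]
      exact Nat.odd_iff.mpr (by omega)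
    · rw [hNform (2 * m + 1)]
      rcases hε1 with rfl | rfl
      · exact Or.inl ⟨by linarith, by linarith⟩
      · exact Or.inr ⟨by linarith, by linarith⟩
    · intro hB
      exfalso
      rw [show ((a + (2 * m + 2) * e : ℕ) : ℝ) + (e : ℝ) = ((a + (2 * m + 3) * e : ℕ) : ℝ)
          from by push_cast; ring,
        show ((b + (2 * m + 2) * f : ℕ) : ℝ) + (f : ℝ) = ((b + (2 * m + 3) * f : ℕ) : ℝ)
          from by push_cast; ring, hNform (2 * m + 3)] at hB
      rcases hε1 with rfl | rfl <;> rcases hB with ⟨h1, h2⟩ | ⟨h1, h2⟩ <;>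
        linarith [hcpos (2 * m + 3)]
  · show PredRel a b (a + (2 * m + 2) * e) (b + (2 * m + 2) * f)
    have hefab : e + f < a + b := by omega
    have hee : 0 < (2 * m + 2) * e := Nat.mul_pos (by omega) (by omega)
    have hff : 0 < (2 * m + 2) * f := Nat.mul_pos (by omega) (by omega)
    refine predRel_build _ _ e f (m + 1) a b ?_
      (by linarith) (by have := Nat.mul_le_mul_left (2 * m + 2) hef.le; linarith) hef
      (by linarith) hoef ?_ ?_ ?_ (Or.inr ⟨by omega, by ring, by ring⟩)
    · rcases hdet with h | h
      · exact Or.inr (by push_cast; linear_combination -h + (f : ℤ) * haeZ - (e : ℤ) * hbfZ)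
      · exact Or.inl (by push_cast; linear_combination -h + (f : ℤ) * haeZ - (e : ℤ) * hbfZ)
    · rw [show a + (2 * m + 2) * e + (b + (2 * m + 2) * f) =
        (a + b) + 2 * ((m + 1) * (e + f)) from by ring, odd_add_two_mul]
      exact Nat.odd_iff.mpr (by omega)
    · have h1 : (2 * (m + 1) + 1) * (e + f) = (2 * m + 2) * (e + f) + (e + f) := by ring
      have h2 : (2 * m + 2) * (e + f) = (2 * m + 2) * e + (2 * m + 2) * f := by ring
      linarith
    · have h1 : (2 * (m + 1) + 3) * (e + f) = (2 * m + 2) * (e + f) + 3 * (e + f) := by ring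
      have h2 : (2 * m + 2) * (e + f) = (2 * m + 2) * e + (2 * m + 2) * f := by ring
      linarith
  · show b < b + (2 * m + 2) * f
    have := Nat.mul_pos (show 0 < 2 * m + 2 from by omega) (show 0 < f from by omega)
    linarith

lemma step_exists (A : ℝ) (hirr : Irrational A) (s : St) (hs : InvSt A s) :
    ∃ s' : St, InvSt A s' ∧ PredRel s.a s.b s'.a s'.b ∧ s.b < s'.b := by
  obtain ⟨a, b, e, f, g, hh⟩ := s
  have hae := hs.hae
  have hbf := hs.hbf
  have hdet := hs.hdet
  have hbtw := hs.hbtw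
  simp only at hae hbf hdet hbtw
  have hef := hs.hef
  have hg1 := hs.hg1
  have hgh := hs.hgh
  have hab := hs.hab
  have ha1 := hs.ha1
  simp only at hef hg1 hgh hab ha1
  have hf1 : 0 < f := by omega
  have hh1 : 0 < hh := by omega
  have hb1 : 0 < b := by omega
  have haeZ : (a : ℤ) = (e : ℤ) + g := by exact_mod_cast hae
  have hbfZ : (b : ℤ) = (f : ℤ) + hh := by exact_mod_cast hbf
  have haR : ((e : ℝ) + g) = (a : ℝ) := by rw [hae]; push_cast; ring
  have hbR : ((f : ℝ) + hh) = (b : ℝ) := by rw [hbf]; push_cast; ring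
  have hmed : BtwR ((e : ℝ) / f) ((a : ℝ) / b) ((g : ℝ) / hh) := by
    have := mediant_btw e f g hh hf1 hh1 hdet
    rwa [haR, hbR] at this
  have hAab : A ≠ (a : ℝ) / b := irr_ne_div A hirr a b hb1
  rcases btw_split hbtw hmed hAab with h1 | h2
  · -- A between e/f and a/b
    have hdet2 : (e * b : ℤ) - f * a = 1 ∨ (e * b : ℤ) - f * a = -1 := by
      rcases hdet with h | h
      · exact Or.inl (by linear_combination h + (e : ℤ) * hbfZ - (f : ℤ) * haeZ)
      · exact Or.inr (by linear_combination h + (e : ℤ) * hbfZ - (f : ℤ) * haeZ)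
    have hM1 : BtwR ((e : ℝ) / f) (((a + e : ℕ) : ℝ) / ((b + f : ℕ) : ℝ)) ((a : ℝ) / b) := by
      have := mediant_btw e f a b hf1 hb1 hdet2
      have c1 : ((e : ℝ) + a) = ((a + e : ℕ) : ℝ) := by push_cast; ring
      have c2 : ((f : ℝ) + b) = ((b + f : ℕ) : ℝ) := by push_cast; ring
      rwa [c1, c2] at this
    have hAM1 : A ≠ ((a + e : ℕ) : ℝ) / ((b + f : ℕ) : ℝ) :=
      irr_ne_div A hirr (a + e) (b + f) (by omega)
    rcases btw_split h1 hM1 hAM1 with h11 | h12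
    · exact move3 A hirr a b e f g hh hs h11
    · exact move2 A a b e f g hh hs h12
  · exact move1 A a b e f g hh hs h2

lemma init_exists (A : ℝ) (hA0 : 0 < A) (hA1 : A < 1) (hirr : Irrational A) :
    ∃ s : St, InvSt A s ∧ PredRel 0 1 s.a s.b ∧ 2 ≤ s.b := by
  set n := ⌊1 / A⌋₊ with hn
  have h1A : 1 < 1 / A := by rw [lt_div_iff₀ hA0]; linarith
  have hn1 : 1 ≤ n := Nat.le_floor (by exact_mod_cast h1A.le)
  have hfl : (n : ℝ) ≤ 1 / A := Nat.floor_le (by positivity)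
  have hfl2 : 1 / A < (n : ℝ) + 1 := Nat.lt_floor_add_one _
  have hnR : (0 : ℝ) < n := by exact_mod_cast hn1
  have hAn : A < 1 / (n : ℝ) := by
    have hle : A ≤ 1 / (n : ℝ) := by
      rw [le_div_iff₀ hnR]
      have := mul_le_mul_of_nonneg_right hfl hA0.le
      rw [one_div_mul_cancel (ne_of_gt hA0)] at this
      linarith [this]
    refine lt_of_le_of_ne hle ?_
    have := irr_ne_div A hirr 1 n hn1
    simpa using this
  have hAn1 : 1 / ((n : ℝ) + 1) < A := by
    rw [div_lt_iff₀ (by linarith)]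
    have := mul_lt_mul_of_pos_right hfl2 hA0
    rw [one_div_mul_cancel (ne_of_gt hA0)] at this
    linarith [this]
  set m := if Even n then n else n + 1 with hm
  have hme : m % 2 = 0 := by
    by_cases hev : Even n
    · have := Nat.even_iff.mp hev
      simp only [hm, if_pos hev]
      omega
    · have := Nat.odd_iff.mp (Nat.not_even_iff_odd.mp hev)
      simp only [hm, if_neg hev]
      omega
  have hm2 : 2 ≤ m ∧ n ≤ m ∧ m ≤ n + 1 := by
    by_cases hev : Even n
    · have := Nat.even_iff.mp hev
      simp only [hm, if_pos hev]
      omega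
    · simp only [hm, if_neg hev]
      omega
  obtain ⟨hm2', hmn, hmn1⟩ := hm2
  have hmR : (1 : ℝ) ≤ ((m - 1 : ℕ) : ℝ) := by
    have : 1 ≤ m - 1 := by omega
    exact_mod_cast this
  refine ⟨⟨1, m, 0, 1, 1, m - 1⟩, ?_, ?_, by show 2 ≤ m; omega⟩
  · refine InvSt.mk' A _ _ _ _ _ _ (by omega) (by omega)
      (Or.inr (by push_cast; ring)) (by omega) (by omega) (by omega) (by omega) (by omega)
      (Nat.odd_iff.mpr (by omega)) (Nat.odd_iff.mpr (by omega)) (Nat.odd_iff.mpr (by omega))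
      ?_ ?_
    · refine Or.inl ⟨by simpa using hA0, ?_⟩
      have hmlen : ((m - 1 : ℕ) : ℝ) ≤ (n : ℝ) := by exact_mod_cast (by omega : m - 1 ≤ n)
      have h9 := one_div_le_one_div_of_le (lt_of_lt_of_le zero_lt_one hmR) hmlen
      push_cast
      linarith
    · intro hB
      exfalso
      have hmR2 : ((m : ℕ) : ℝ) + 1 ≤ (n : ℝ) + 2 := by
        have : m ≤ n + 1 := hmn1
        exact_mod_cast by omega
      rcases hB with ⟨_, h2⟩ | ⟨_, h2⟩
      · -- A < (1+0)/(m+1)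
        push_cast at h2
        norm_num at h2
        rw [← one_div] at h2
        have hnm : (n : ℝ) ≤ m := by exact_mod_cast hmn
        have h10 := one_div_le_one_div_of_le
          (show (0 : ℝ) < (n : ℝ) + 1 by linarith) (show (n : ℝ) + 1 ≤ (m : ℝ) + 1 by linarith)
        linarith
      · -- A < 0/1
        simp at h2
        linarith
  · show PredRel 0 1 1 m
    refine ⟨⟨Nat.coprime_one_left m, by omega, by omega, ?_⟩, Or.inl ⟨rfl, rfl, rfl⟩⟩
    rw [one_mul]
    exact Nat.even_iff.mpr hme

lemma inv_bound (A : ℝ) (s : St) (hs : InvSt A s) :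
    |(s.a : ℝ) / s.b - A| < 1 / ((s.b : ℝ) - 1) := by
  obtain ⟨a, b, e, f, g, hh⟩ := s
  have hae := hs.hae
  have hbf := hs.hbf
  have hdet := hs.hdet
  have hbtw := hs.hbtw
  have hef := hs.hef
  have hg1 := hs.hg1
  have hgh := hs.hgh
  have hab := hs.hab
  have ha1 := hs.ha1
  simp only at hae hbf hdet hbtw hef hg1 hgh hab ha1 ⊢
  have hf1 : 0 < f := by omega
  have hh1 : 0 < hh := by omega
  have hb1 : 0 < b := by omega
  have hfR : (1 : ℝ) ≤ f := by exact_mod_cast hf1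
  have hhR : (1 : ℝ) ≤ hh := by exact_mod_cast hh1
  have hbR2 : (2 : ℝ) ≤ b := by exact_mod_cast (by omega : 2 ≤ b)
  have haR : ((e : ℝ) + g) = (a : ℝ) := by rw [hae]; push_cast; ring
  have hbR : ((f : ℝ) + hh) = (b : ℝ) := by rw [hbf]; push_cast; ring
  have hmed : BtwR ((e : ℝ) / f) ((a : ℝ) / b) ((g : ℝ) / hh) := by
    have := mediant_btw e f g hh hf1 hh1 hdet
    rwa [haR, hbR] at this
  have h1 : |(a : ℝ) / b - A| < |(g : ℝ) / hh - (e : ℝ) / f| := btw_abs hmed hbtw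
  have h2 : |(g : ℝ) / hh - (e : ℝ) / f| = 1 / ((hh : ℝ) * f) := by
    rw [div_sub_div _ _ (by linarith : (hh : ℝ) ≠ 0) (by linarith : (f : ℝ) ≠ 0)]
    rw [abs_div]
    have hnum : |(g : ℝ) * f - hh * e| = 1 := by
      rcases hdet with h | h
      · have : (g : ℝ) * f - hh * e = -1 := by
          have := h
          have hc : (e : ℝ) * hh - f * g = 1 := by exact_mod_cast this
          linarith
        rw [this]; norm_num
      · have hc : (e : ℝ) * hh - f * g = -1 := by exact_mod_cast h
        have : (g : ℝ) * f - hh * e = 1 := by linarith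
        rw [this]; norm_num
    rw [hnum, abs_of_pos (by nlinarith : (0 : ℝ) < (hh : ℝ) * f)]
  have h3 : (b : ℝ) - 1 ≤ (hh : ℝ) * f := by
    have : ((f : ℝ) - 1) * ((hh : ℝ) - 1) ≥ 0 := mul_nonneg (by linarith) (by linarith)
    nlinarith [hbR]
  have h4 : 1 / ((hh : ℝ) * f) ≤ 1 / ((b : ℝ) - 1) :=
    one_div_le_one_div_of_le (by linarith) h3
  linarith [h1, h2 ▸ h1]


set_option maxHeartbeats 1000000 in
/-- existence of the predecessor sequence converging to an
irrational A ∈ (0,1), starting at 0/1. -/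
theorem exists_predecessor_sequence (A : ℝ) (hA0 : 0 < A) (hA1 : A < 1)
    (hirr : Irrational A) :
    ∃ p q : ℕ → ℕ, p 0 = 0 ∧ q 0 = 1 ∧
      (∀ k, PredRel (p k) (q k) (p (k + 1)) (q (k + 1))) ∧
      Filter.Tendsto (fun k => (p k : ℝ) / (q k : ℝ)) Filter.atTop (nhds A) := by
  classical
  obtain ⟨s₀, hs₀, hP₀, hb₀⟩ := init_exists A hA0 hA1 hirr
  have hstep : ∀ s : {s : St // InvSt A s}, ∃ s' : {s : St // InvSt A s},
      PredRel s.1.a s.1.b s'.1.a s'.1.b ∧ s.1.b < s'.1.b := by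
    rintro ⟨s, hs⟩
    obtain ⟨s', h1, h2, h3⟩ := step_exists A hirr s hs
    exact ⟨⟨s', h1⟩, h2, h3⟩
  choose F hF1 hF2 using hstep
  set S : ℕ → {s : St // InvSt A s} := fun k => F^[k] ⟨s₀, hs₀⟩ with hS
  have hS0 : S 0 = ⟨s₀, hs₀⟩ := rfl
  have hSsucc : ∀ k, S (k + 1) = F (S k) := fun k => Function.iterate_succ_apply' F k _
  have hSb : ∀ k, k + 2 ≤ (S k).1.b := by
    intro k
    induction k with
    | zero => rw [hS0]; exact hb₀
    | succ j ih =>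
      rw [hSsucc j]
      have := hF2 (S j)
      omega
  refine ⟨fun k => if k = 0 then 0 else (S (k - 1)).1.a,
    fun k => if k = 0 then 1 else (S (k - 1)).1.b, by simp, by simp, ?_, ?_⟩
  · intro k
    cases k with
    | zero =>
      simp only [if_pos rfl, if_neg (Nat.one_ne_zero)]
      rw [hS0]
      exact hP₀
    | succ j =>
      simp only [Nat.succ_ne_zero, if_neg, if_false, Nat.add_sub_cancel]
      rw [hSsucc j]
      exact hF1 (S j)
  · rw [Metric.tendsto_atTop]
    intro ε hε
    obtain ⟨N, hN⟩ := exists_nat_one_div_lt hε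
    refine ⟨N + 1, fun k hk => ?_⟩
    obtain ⟨j, rfl⟩ : ∃ j, k = j + 1 := ⟨k - 1, by omega⟩
    have hjN : N ≤ j := by omega
    simp only [Nat.succ_ne_zero, if_neg, if_false, Nat.add_sub_cancel]
    rw [Real.dist_eq]
    have hb := hSb j
    have h1 := inv_bound A (S j).1 (S j).2
    have hbR : ((j : ℝ) + 1) ≤ ((S j).1.b : ℝ) - 1 := by
      have : ((j + 2 : ℕ) : ℝ) ≤ ((S j).1.b : ℝ) := by exact_mod_cast hb
      push_cast at this
      linarith
    have h2 : 1 / (((S j).1.b : ℝ) - 1) ≤ 1 / ((j : ℝ) + 1) :=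
      one_div_le_one_div_of_le (by positivity) hbR
    have h3 : 1 / ((j : ℝ) + 1) ≤ 1 / ((N : ℝ) + 1) := by
      apply one_div_le_one_div_of_le (by positivity)
      have : (N : ℝ) ≤ j := by exact_mod_cast hjN
      linarith
    linarith
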